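/- For σ ∈ S_n with LTR minima m_1 > m_2 > ... > m_k at positions p_1 < p_2 < ... < p_k, the ascent-descent code (A, D) of the Dyck path λ(σ) is given by A_i = n + 1 − m_i for 1 ≤ i ≤ k−1 and D_i = p_{i+1} − 1 for 1 ≤ i ≤ k−1. -/

import Mathlib

/-- A Dyck word: `true` = up step, `false` = down step. -/
def IsDyckWord (p : List Bool) : Prop :=
  (∀ t, t <+: p → t.count false ≤ t.count true) ∧ p.count true = p.count false

/-- Successive differences of a list (with an implicit initial 0). -/
def diffs (l : List ℕ) : List ℕ := l.zipWith (· - ·) (0 :: l)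

/-- The Dyck path of semilength `n` with ascent-descent code `(A, D)`. -/
def pathOfCode (n : ℕ) (A D : List ℕ) : List Bool :=
  ((diffs (A ++ [n])).zip (diffs (D ++ [n]))).flatMap
    fun ad => List.replicate ad.1 true ++ List.replicate ad.2 false

def IsLTRMin {n : ℕ} (σ : Equiv.Perm (Fin n)) (i : Fin n) : Prop := ∀ j, j < i → σ i < σ j
def IsRTLMax {n : ℕ} (σ : Equiv.Perm (Fin n)) (i : Fin n) : Prop := ∀ j, i < j → σ j < σ i

instance {n : ℕ} (σ : Equiv.Perm (Fin n)) (i : Fin n) : Decidable (IsLTRMin σ i) := by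
  unfold IsLTRMin; infer_instance
instance {n : ℕ} (σ : Equiv.Perm (Fin n)) (i : Fin n) : Decidable (IsRTLMax σ i) := by
  unfold IsRTLMax; infer_instance

def pmin {n : ℕ} (σ : Equiv.Perm (Fin n)) : Set (Fin n) := {i | IsLTRMin σ i}
def vmin {n : ℕ} (σ : Equiv.Perm (Fin n)) : Set (Fin n) := σ '' pmin σ
def pmax {n : ℕ} (σ : Equiv.Perm (Fin n)) : Set (Fin n) := {i | IsRTLMax σ i}
def vmax {n : ℕ} (σ : Equiv.Perm (Fin n)) : Set (Fin n) := σ '' pmax σ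

/-- Reverse-complement of a permutation. -/
def rcPerm {n : ℕ} (σ : Equiv.Perm (Fin n)) : Equiv.Perm (Fin n) :=
  (Fin.revPerm.trans σ).trans Fin.revPerm

def Avoids123 {n : ℕ} (σ : Equiv.Perm (Fin n)) : Prop :=
  ¬ ∃ i j k : Fin n, i < j ∧ j < k ∧ σ i < σ j ∧ σ j < σ k

def Avoids1234 {n : ℕ} (σ : Equiv.Perm (Fin n)) : Prop :=
  ¬ ∃ i j k l : Fin n, i < j ∧ j < k ∧ k < l ∧ σ i < σ j ∧ σ j < σ k ∧ σ k < σ l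

/-- The value (1-based) of the previous LTR minimum before position `i` (`n+1` if none). -/
def prevMinVal {n : ℕ} (σ : Equiv.Perm (Fin n)) (i : Fin n) : ℕ :=
  ((((List.finRange n).filter fun j => decide (j < i)).map fun j => (σ j : ℕ) + 1)).foldr min (n + 1)

/-- The map λ: each LTR minimum m_i gives m_{i-1} - m_i up steps, each maximal
block of ℓ non-minima gives ℓ+1 down steps. -/
def lamWord {n : ℕ} (σ : Equiv.Perm (Fin n)) : List Bool :=
  ((List.finRange n).flatMap fun i =>
    if IsLTRMin σ i then
      (if (i : ℕ) = 0 then [] else [false]) ++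
        List.replicate (prevMinVal σ i - ((σ i : ℕ) + 1)) true
    else [false]) ++ List.replicate (min n 1) false

/-- The value (1-based) of the largest entry to the right of position `i` (`0` if none). -/
def nextMaxVal {n : ℕ} (σ : Equiv.Perm (Fin n)) (i : Fin n) : ℕ :=
  ((((List.finRange n).filter fun j => decide (i < j)).map fun j => (σ j : ℕ) + 1)).foldr max 0

/-- The map μ: reading right to left, each RTL maximum M_i gives U^(M_i-M_{i-1}) D,
each non-maximum gives a D step. -/
def muWord {n : ℕ} (σ : Equiv.Perm (Fin n)) : List Bool :=
  (List.finRange n).reverse.flatMap fun i =>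
    if IsRTLMax σ i then
      List.replicate (((σ i : ℕ) + 1) - nextMaxVal σ i) true ++ [false]
    else [false]

/-- The set of partial sums of ascent lengths of a Dyck word (including the total). -/
def ascCode (p : List Bool) : Finset ℕ :=
  ((Finset.range p.length).filter fun i =>
      0 < i ∧ p.getD (i-1) false = true ∧ p.getD i true = false).image
    fun i => (p.take i).count true

/-- The set of partial sums of descent lengths of a Dyck word (excluding the total). -/
def descCode (p : List Bool) : Finset ℕ :=
  ((Finset.range p.length).filter fun i =>
      0 < i ∧ p.getD (i-1) true = false ∧ p.getD i false = true).image
    fun i => (p.take i).count false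

/-- Index of the first return of a Dyck word. -/
def firstRet (p : List Bool) : ℕ :=
  (((List.range (p.length + 1)).filter fun i =>
      decide (0 < i) && decide ((p.take i).count true = (p.take i).count false)).head?).getD p.length

def compsAux : ℕ → List Bool → List (List Bool)
  | 0, _ => []
  | fuel+1, p => if p = [] then [] else
      p.take (firstRet p) :: compsAux fuel (p.drop (firstRet p))

/-- Decomposition of a Dyck word into irreducible components. -/
def comps (p : List Bool) : List (List Bool) := compsAux p.length p

/-- The involution L' on an irreducible Dyck path, via ascent-descent codes. -/
def LprimeIrr (p : List Bool) : List Bool :=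
  let n := p.count true
  let A' := ((Finset.Icc 1 (n-2) \ ((ascCode p).erase n).image fun a => a - 1).image
      fun a => n - a).sort (· ≤ ·)
  let D' := ((Finset.Icc 1 (n-2) \ descCode p).image fun d => n - 1 - d).sort (· ≤ ·)
  pathOfCode n A' D'

/-- The involution L', acting on each irreducible component. -/
def LprimeWord (p : List Bool) : List Bool := (comps p).reverse.flatMap LprimeIrr

def ascList (p : List Bool) : List ℕ := ((ascCode p).erase (p.count true)).sort (· ≤ ·)
def descList (p : List Bool) : List ℕ := (descCode p).sort (· ≤ ·)

def IrreducibleDyck (p : List Bool) : Prop :=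
  IsDyckWord p ∧ p ≠ [] ∧ ∀ t, t <+: p → t ≠ [] → t ≠ p → t.count false < t.count true

/-- Covering relation: `Q` covers `P` if the code of `Q` is obtained from the code of
`P` by deleting `A_i` from the ascent code and `D_j` from the descent code, `i ≤ j`. -/
def CoversIrr (P Q : List Bool) : Prop :=
  IrreducibleDyck P ∧ IrreducibleDyck Q ∧
  ∃ i j : ℕ, i ≤ j ∧ ascList Q = (ascList P).eraseIdx i ∧ descList Q = (descList P).eraseIdx j

/-- The order relation on Dyck paths. -/
def DyckLE (P Q : List Bool) : Prop :=
  List.Forall₂ (Relation.ReflTransGen CoversIrr) (comps P) (comps Q)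

/-- The (increasing) list of positions of the LTR minima of σ. -/
def pminList {n : ℕ} (σ : Equiv.Perm (Fin n)) : List (Fin n) :=
  (List.finRange n).filter fun i => decide (IsLTRMin σ i)


namespace LamAux
open List

variable {n : ℕ} (σ : Equiv.Perm (Fin n))

/-- step function of `lamWord` -/
def g (i : Fin n) : List Bool :=
  if IsLTRMin σ i then
    (if (i : ℕ) = 0 then [] else [false]) ++
      List.replicate (prevMinVal σ i - ((σ i : ℕ) + 1)) true
  else [false]

lemma lamWord_eq : lamWord σ = (List.finRange n).flatMap (g σ) ++ List.replicate (min n 1) false := rfl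

def diffs' (c : ℕ) (l : List ℕ) : List ℕ := l.zipWith (· - ·) (c :: l)

lemma diffs_eq (l : List ℕ) : diffs l = diffs' 0 l := rfl

lemma diffs'_cons (c x : ℕ) (xs : List ℕ) :
    diffs' c (x :: xs) = (x - c) :: diffs' x xs := by
  cases xs <;> simp [diffs']

/-- the part of λ(σ) after the first ascent, given previous min value `v` (1-based),
previous min position `q` (0-based), and the list of remaining minima positions. -/
def rest (σ : Equiv.Perm (Fin n)) : ℕ → ℕ → List (Fin n) → List Bool
  | _, q, [] => List.replicate (n - q) false
  | v, q, q' :: ms => List.replicate ((q' : ℕ) - q) false ++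
      List.replicate (v - ((σ q' : ℕ) + 1)) true ++ rest σ ((σ q' : ℕ) + 1) (q' : ℕ) ms

lemma two (ms : List (Fin n)) : ∀ (q : Fin n) (c : ℕ),
    (((diffs' c ((q :: ms).map fun p => n - (σ p : ℕ))).zip
      (diffs' (q : ℕ) (ms.map (fun p => (p : ℕ)) ++ [n]))).flatMap
        fun ad => List.replicate ad.1 true ++ List.replicate ad.2 false)
    = List.replicate ((n - (σ q : ℕ)) - c) true ++ rest σ ((σ q : ℕ) + 1) (q : ℕ) ms := by
  induction ms with
  | nil => intro q c; simp [diffs', rest]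
  | cons q' ms ih =>
    intro q c
    have e1 : (q :: q' :: ms).map (fun p => n - (σ p : ℕ))
        = (n - (σ q : ℕ)) :: ((q' :: ms).map fun p => n - (σ p : ℕ)) := rfl
    have e2 : ((q' :: ms).map (fun p => (p : ℕ)) ++ [n]) = (q' : ℕ) :: (ms.map (fun p => (p : ℕ)) ++ [n]) := rfl
    rw [e1, diffs'_cons, e2, diffs'_cons, zip_cons_cons, flatMap_cons, ih q' (n - (σ q : ℕ))]
    have h1 : (σ q : ℕ) < n := (σ q).isLt
    have h2 : (σ q' : ℕ) < n := (σ q').isLt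
    rw [rest]
    rw [show (n - (σ q' : ℕ)) - (n - (σ q : ℕ)) = ((σ q : ℕ) + 1) - ((σ q' : ℕ) + 1) by omega]
    simp [List.append_assoc]

lemma flatMap_const_false {l : List (Fin n)} {f : Fin n → List Bool}
    (h : ∀ x ∈ l, f x = [false]) : l.flatMap f = List.replicate l.length false := by
  induction l with
  | nil => rfl
  | cons a l ih =>
    rw [flatMap_cons, h a (mem_cons_self), ih fun x hx => h x (mem_cons_of_mem a hx)]
    rfl

lemma foldr_min_le_of_mem {l : List ℕ} {x a : ℕ} (h : x ∈ l) : l.foldr min a ≤ x := by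
  induction l with
  | nil => simp at h
  | cons b l ih =>
    rcases mem_cons.mp h with rfl | h
    · exact min_le_left _ _
    · exact le_trans (min_le_right _ _) (ih h)

lemma le_foldr_min {l : List ℕ} {b a : ℕ} (hb : b ≤ a) (h : ∀ x ∈ l, b ≤ x) :
    b ≤ l.foldr min a := by
  induction l with
  | nil => exact hb
  | cons c l ih =>
    exact le_min (h c (mem_cons_self)) (ih fun x hx => h x (mem_cons_of_mem c hx))

lemma prevMinVal_of_zero {q : Fin n} (hq : (q : ℕ) = 0) : prevMinVal σ q = n + 1 := by
  unfold prevMinVal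
  rw [List.filter_eq_nil_iff.mpr ?_]
  · rfl
  · intro a _
    simp only [decide_eq_true_eq, Fin.lt_def, hq]
    omega

lemma sigma_between {q q' : Fin n} (hq : IsLTRMin σ q)
    (hno : ∀ j, q < j → j < q' → ¬ IsLTRMin σ j) :
    ∀ j, q < j → j < q' → σ q < σ j := by
  have H : ∀ m : ℕ, ∀ j : Fin n, (j : ℕ) ≤ m → q < j → j < q' → σ q < σ j := by
    intro m
    induction m with
    | zero =>
      intro j hj hqj _
      rw [Fin.lt_def] at hqj; omega
    | succ m ih =>
      intro j hj hqj hjq'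
      by_contra hc
      push_neg at hc
      have hne : σ j ≠ σ q := fun h => absurd (σ.injective h) (by rintro rfl; exact lt_irrefl _ hqj)
      have hlt : σ j < σ q := lt_of_le_of_ne hc hne
      refine hno j hqj hjq' ?_
      intro j'' hj''
      rcases lt_trichotomy j'' q with h | h | h
      · exact hlt.trans (hq j'' h)
      · rw [h]; exact hlt
      · have hj''j : (j'' : ℕ) < (j : ℕ) := hj''
        have := ih j'' (by omega) h (hj''.trans hjq')
        exact hlt.trans this
  intro j h1 h2
  exact H (j : ℕ) j le_rfl h1 h2

lemma prevMinVal_next {q q' : Fin n} (hq : IsLTRMin σ q) (hlt : q < q')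
    (hno : ∀ j, q < j → j < q' → ¬ IsLTRMin σ j) :
    prevMinVal σ q' = (σ q : ℕ) + 1 := by
  unfold prevMinVal
  apply Nat.le_antisymm
  · apply foldr_min_le_of_mem
    apply List.mem_map.mpr
    exact ⟨q, List.mem_filter.mpr ⟨List.mem_finRange q, by simpa using hlt⟩, rfl⟩
  · apply le_foldr_min
    · have : (σ q : ℕ) < n := (σ q).isLt
      omega
    · intro x hx
      obtain ⟨j, hj, rfl⟩ := List.mem_map.mp hx
      have hj' : j < q' := by simpa using (List.mem_filter.mp hj).2
      rcases lt_trichotomy j q with h | h | h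
      · have := hq j h
        simp only [Fin.lt_def] at this
        omega
      · rw [h]
      · have := sigma_between σ hq hno j h hj'
        simp only [Fin.lt_def] at this
        omega

def minsAfter (q : Fin n) : List (Fin n) := (pminList σ).filter fun j => decide (q < j)

lemma mem_pminList {j : Fin n} : j ∈ pminList σ ↔ IsLTRMin σ j := by
  simp [pminList, List.mem_filter]

lemma mem_minsAfter {q j : Fin n} : j ∈ minsAfter σ q ↔ IsLTRMin σ j ∧ q < j := by
  simp only [minsAfter, List.mem_filter, mem_pminList, decide_eq_true_eq]

lemma pminList_pairwise : (pminList σ).Pairwise (· < ·) :=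
  (List.pairwise_lt_finRange n).sublist (List.filter_sublist)

lemma minsAfter_pairwise (q : Fin n) : (minsAfter σ q).Pairwise (· < ·) :=
  (pminList_pairwise σ).sublist (List.filter_sublist)

lemma mem_drop_finRange {a : ℕ} {x : Fin n} (h : x ∈ (List.finRange n).drop a) :
    a ≤ (x : ℕ) := by
  obtain ⟨i, hi, rfl⟩ := List.mem_iff_getElem.mp h
  rw [List.getElem_drop, List.getElem_finRange]
  simp only [Fin.coe_cast]
  omega

lemma mem_take_drop_finRange {a m : ℕ} {x : Fin n}
    (h : x ∈ ((List.finRange n).drop a).take m) : a ≤ (x : ℕ) ∧ (x : ℕ) < a + m := by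
  obtain ⟨i, hi, rfl⟩ := List.mem_iff_getElem.mp h
  have him : i < m := by
    have := hi
    rw [List.length_take] at this
    omega
  rw [List.getElem_take, List.getElem_drop, List.getElem_finRange]
  simp only [Fin.coe_cast]
  omega

lemma one : ∀ (k : ℕ) (q : Fin n), n - (q : ℕ) ≤ k → IsLTRMin σ q →
    ((List.finRange n).drop ((q : ℕ) + 1)).flatMap (g σ) ++ [false]
      = rest σ ((σ q : ℕ) + 1) (q : ℕ) (minsAfter σ q) := by
  intro k
  induction k with
  | zero => intro q h _; have := q.isLt; omega
  | succ k ih =>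
    intro q hk hq
    cases hma : minsAfter σ q with
    | nil =>
      have hall : ∀ j : Fin n, q < j → ¬ IsLTRMin σ j := by
        intro j h1 h2
        have : j ∈ minsAfter σ q := (mem_minsAfter σ).mpr ⟨h2, h1⟩
        rw [hma] at this; simp at this
      rw [rest]
      have hg : ∀ x ∈ (List.finRange n).drop ((q : ℕ) + 1), g σ x = [false] := by
        intro x hx
        have hx' : q < x := by
          have := mem_drop_finRange (n := n) hx
          rw [Fin.lt_def]; omega
        simp [g, hall x hx']
      rw [flatMap_const_false hg, List.length_drop, List.length_finRange]
      have hqn : (q : ℕ) < n := q.isLt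
      rw [show n - (q : ℕ) = (n - ((q : ℕ) + 1)) + 1 by omega, List.replicate_succ']
    | cons q' ms =>
      have hmem : q' ∈ minsAfter σ q := by rw [hma]; exact mem_cons_self
      obtain ⟨hq'min, hqq'⟩ := (mem_minsAfter σ).mp hmem
      have hpw : (q' :: ms).Pairwise (· < ·) := hma ▸ minsAfter_pairwise σ q
      have hmsgt : ∀ x ∈ ms, q' < x := fun x hx => (List.pairwise_cons.mp hpw).1 x hx
      have hno : ∀ j, q < j → j < q' → ¬ IsLTRMin σ j := by
        intro j h1 h2 h3
        have : j ∈ minsAfter σ q := (mem_minsAfter σ).mpr ⟨h3, h1⟩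
        rw [hma] at this
        rcases mem_cons.mp this with rfl | hmem'
        · exact lt_irrefl _ h2
        · exact absurd (h2.trans (hmsgt j hmem')) (lt_irrefl j)
      have hms : minsAfter σ q' = ms := by
        have h1 : minsAfter σ q' = (minsAfter σ q).filter fun j => decide (q' < j) := by
          rw [minsAfter, minsAfter, List.filter_filter]
          apply List.filter_congr
          intro a _
          by_cases h : q' < a
          · simp [h, hqq'.trans h]
          · simp [h]
        rw [h1, hma, List.filter_cons]
        rw [if_neg (by simp)]
        exact List.filter_eq_self.mpr fun a ha => by simpa using hmsgt a ha
      have hq'lt : (q : ℕ) < (q' : ℕ) := hqq'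
      have hq'n : (q' : ℕ) < n := q'.isLt
      have split : (List.finRange n).drop ((q : ℕ) + 1)
          = ((List.finRange n).drop ((q : ℕ) + 1)).take ((q' : ℕ) - ((q : ℕ) + 1))
            ++ (List.finRange n).drop (q' : ℕ) := by
        conv_lhs => rw [← List.take_append_drop ((q' : ℕ) - ((q : ℕ) + 1))
          ((List.finRange n).drop ((q : ℕ) + 1))]
        congr 1
        rw [List.drop_drop]
        congr 1
        omega
      rw [split, flatMap_append]
      have h1 : (((List.finRange n).drop ((q : ℕ) + 1)).take ((q' : ℕ) - ((q : ℕ) + 1))).flatMap (g σ)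
          = List.replicate ((q' : ℕ) - ((q : ℕ) + 1)) false := by
        rw [flatMap_const_false]
        · rw [List.length_take, List.length_drop, List.length_finRange,
            min_eq_left (by omega)]
        · intro x hx
          obtain ⟨hx1, hx2⟩ := mem_take_drop_finRange (n := n) hx
          have : ¬ IsLTRMin σ x := hno x (by rw [Fin.lt_def]; omega) (by rw [Fin.lt_def]; omega)
          simp [g, this]
      have h2 : (List.finRange n).drop (q' : ℕ) = q' :: (List.finRange n).drop ((q' : ℕ) + 1) := by
        rw [List.drop_eq_getElem_cons (by rw [List.length_finRange]; exact q'.isLt)]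
        congr 1
        rw [List.getElem_finRange]
        exact Fin.ext (by simp)
      rw [h1, h2, flatMap_cons]
      have hgq' : g σ q' = [false] ++ List.replicate (prevMinVal σ q' - ((σ q' : ℕ) + 1)) true := by
        rw [g, if_pos hq'min, if_neg (by omega)]
      rw [hgq', prevMinVal_next σ hq hqq' hno]
      have hih := ih q' (by omega) hq'min
      rw [hms] at hih
      rw [rest]
      rw [show ((q' : ℕ) - (q : ℕ)) = ((q' : ℕ) - ((q : ℕ) + 1)) + 1 by omega,
        List.replicate_succ']
      simp only [List.append_assoc, List.cons_append, List.nil_append, ← hih]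

lemma le_getLast_of_pairwise {l : List (Fin n)} (h : l.Pairwise (· < ·)) {x : Fin n}
    (hx : x ∈ l) (hne : l ≠ []) : x ≤ l.getLast hne := by
  induction l with
  | nil => simp at hx
  | cons a t ih =>
    rcases List.pairwise_cons.mp h with ⟨ha, ht⟩
    cases t with
    | nil =>
      rcases mem_cons.mp hx with rfl | hx'
      · exact le_rfl
      · simp at hx'
    | cons b t' =>
      rw [List.getLast_cons (by simp)]
      rcases mem_cons.mp hx with rfl | hx'
      · exact le_of_lt (ha _ (List.getLast_mem _))
      · exact ih ht hx' (by simp)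

end LamAux

/-- The ascent-descent code of λ(σ): `A_i = n + 1 - m_i` and `D_i = p_{i+1} - 1`
(values and positions taken 1-based). -/
theorem lamWord_code {n : ℕ} (σ : Equiv.Perm (Fin n)) :
    lamWord σ = pathOfCode n
      ((pminList σ).dropLast.map fun p => n - (σ p : ℕ))
      ((pminList σ).tail.map fun p => (p : ℕ)) := by
  classical
  open List LamAux in
  rcases Nat.eq_zero_or_pos n with rfl | hn
  · simp [lamWord, pathOfCode, pminList, diffs]
  · set z : Fin n := ⟨0, hn⟩ with hz
    have hzv : (z : ℕ) = 0 := rfl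
    have hzmin : IsLTRMin σ z := by
      intro j hj
      rw [Fin.lt_def, hzv] at hj
      omega
    have hfr : List.finRange n = z :: (List.finRange n).drop 1 := by
      conv_lhs => rw [← List.drop_zero (l := List.finRange n),
        List.drop_eq_getElem_cons (by rw [List.length_finRange]; exact hn)]
      congr 1
      rw [List.getElem_finRange]
      exact Fin.ext (by simp [hzv])
    have hdropgt : ∀ x ∈ (List.finRange n).drop 1, z < x := by
      intro x hx
      have := mem_drop_finRange (n := n) hx
      rw [Fin.lt_def, hzv]
      omega
    have hps : pminList σ = z :: minsAfter σ z := by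
      have h1 : pminList σ
          = z :: (((List.finRange n).drop 1).filter fun i => decide (IsLTRMin σ i)) := by
        conv_lhs => rw [pminList, hfr]
        rw [List.filter_cons, if_pos (by simpa using hzmin)]
      rw [h1]
      congr 1
      rw [minsAfter, h1, List.filter_cons, if_neg (by simp), List.filter_filter]
      apply List.filter_congr
      intro a ha
      simp [hdropgt a ha]
    have hpsne : pminList σ ≠ [] := by rw [hps]; simp
    -- the last minimum has value 0
    have hlast : (σ ((pminList σ).getLast hpsne) : ℕ) = 0 := by
      set u := (pminList σ).getLast hpsne with hu
      set w := σ.symm ⟨0, hn⟩ with hw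
      have hσw : σ w = ⟨0, hn⟩ := σ.apply_symm_apply _
      have hwmin : IsLTRMin σ w := by
        intro j hj
        have hne : σ j ≠ σ w := fun h => absurd (σ.injective h) (by rintro rfl; exact lt_irrefl _ hj)
        rw [Fin.lt_def, hσw]
        rw [hσw] at hne
        have : (σ j : ℕ) ≠ 0 := fun h0 => hne (Fin.ext (by simpa using h0))
        simpa using Nat.pos_of_ne_zero this
      have humin : IsLTRMin σ u := (mem_pminList σ).mp (hu ▸ List.getLast_mem hpsne)
      have hwmem : w ∈ pminList σ := (mem_pminList σ).mpr hwmin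
      have hwle : w ≤ u := le_getLast_of_pairwise (pminList_pairwise σ) hwmem hpsne
      rcases eq_or_lt_of_le hwle with h | hwu
      · rw [← h, hσw]
      · exfalso
        have := humin w hwu
        rw [hσw, Fin.lt_def] at this
        omega
    have hA : ((pminList σ).dropLast.map fun p => n - (σ p : ℕ)) ++ [n]
        = (pminList σ).map fun p => n - (σ p : ℕ) := by
      conv_rhs => rw [← List.dropLast_append_getLast hpsne]
      rw [List.map_append, List.map_singleton, hlast]
      simp
    have htwo := two σ (minsAfter σ z) z 0
    rw [hzv] at htwo
    have hone := one σ n z (Nat.sub_le _ _) hzmin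
    rw [hzv] at hone
    have hgz : g σ z = List.replicate (n - (σ z : ℕ)) true := by
      rw [g, if_pos hzmin, if_pos hzv, prevMinVal_of_zero σ hzv]
      simp only [List.nil_append]
      congr 1
      have := (σ z).isLt
      omega
    rw [lamWord_eq, pathOfCode, hA, diffs_eq, diffs_eq, hps, List.tail_cons]
    rw [htwo]
    rw [min_eq_right (by omega : 1 ≤ n), List.replicate_one]
    rw [hfr, flatMap_cons, hgz]
    rw [show (List.finRange n).drop 1 = (List.finRange n).drop (0 + 1) from rfl]
    rw [List.append_assoc, hone]
    simp
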